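/- Let G be a group and let N : ℕ → Subgroup G be a sequence of normal subgroups of G with N₁ ⊇ N₂ ⊇ … (i.e., N is antitone) and ⋂ᵢ Nᵢ = {1}. Let φ be a universal sentence in the language of groups such that φ holds in the quotient group G/Nᵢ for every i ∈ ℕ. Then φ holds in G. -/
import Mathlib

open FirstOrder

/-- The first-order language of groups: one binary function symbol (multiplication),
one unary function symbol (inversion), and one constant symbol (identity). -/
def grpLang : FirstOrder.Language where
  Functions := fun n =>
    match n with
    | 0 => Unit
    | 1 => Unit
    | 2 => Unit
    | _ + 3 => Empty
  Relations := fun _ => Empty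

/-- Every group is naturally a structure for the language of groups. -/
instance grpStructure (G : Type*) [Group G] : grpLang.Structure G where
  funMap := fun {n} f x =>
    match n, f, x with
    | 0, _, _ => (1 : G)
    | 1, _, x => (x 0)⁻¹
    | 2, _, x => x 0 * x 1
    | _ + 3, f, _ => f.elim
  RelMap := fun {_} r _ => r.elim

/-- A universal sentence is one of the form `∀ x₁ … ∀ xₖ, Φ` with `Φ` quantifier-free. -/
def IsUniversalSentence (φ : grpLang.Sentence) : Prop :=
  ∃ (k : ℕ) (ψ : grpLang.BoundedFormula Empty k), ψ.IsQF ∧ φ = ψ.alls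

/-- The quotient map as a `grpLang`-homomorphism. -/
def quotHom (G : Type) [Group G] (N : Subgroup G) [N.Normal] : G →[grpLang] (G ⧸ N) where
  toFun := QuotientGroup.mk
  map_fun' := by
    intro n f x
    match n, f with
    | 0, _ => rfl
    | 1, _ => rfl
    | 2, _ => rfl
  map_rel' := fun r => r.elim

lemma key (G : Type) [Group G] (N : ℕ → Subgroup G) (hnormal : ∀ i, (N i).Normal)
    (hanti : Antitone N) (hinf : ⨅ i, N i = ⊥)
    {n : ℕ} (ψ : grpLang.BoundedFormula Empty n) (hqf : ψ.IsQF)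
    (v : Empty → G) (xs : Fin n → G) :
    ∃ i₀ : ℕ, ∀ i ≥ i₀, haveI := hnormal i;
      (ψ.Realize ((quotHom G (N i)) ∘ v) ((quotHom G (N i)) ∘ xs) ↔ ψ.Realize v xs) := by
  induction hqf with
  | falsum =>
    exact ⟨0, fun i _ => by simp [Language.BoundedFormula.Realize]⟩
  | of_isAtomic hatom =>
    cases hatom with
    | equal t₁ t₂ =>
      set a := t₁.realize (Sum.elim v xs) with ha
      set b := t₂.realize (Sum.elim v xs) with hb
      have hrel : ∀ i, haveI := hnormal i;
          ((Language.Term.bdEqual t₁ t₂).Realize ((quotHom G (N i)) ∘ v)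
            ((quotHom G (N i)) ∘ xs) ↔ a⁻¹ * b ∈ N i) := by
        intro i
        haveI := hnormal i
        have hcomp : Sum.elim ((quotHom G (N i)) ∘ v) ((quotHom G (N i)) ∘ xs)
            = (quotHom G (N i)) ∘ Sum.elim v xs := by
          funext z; cases z <;> rfl
        simp only [Language.BoundedFormula.Realize, Language.Term.bdEqual, hcomp,
          Language.HomClass.realize_term]
        show (QuotientGroup.mk a : G ⧸ N i) = QuotientGroup.mk b ↔ _
        rw [QuotientGroup.eq]
      by_cases hab : a = b
      · refine ⟨0, fun i _ => ?_⟩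
        haveI := hnormal i
        rw [hrel i]
        exact iff_of_true (by rw [hab]; simpa using one_mem _) hab
      · have hne : a⁻¹ * b ≠ 1 := fun hcon => hab (inv_mul_eq_one.mp hcon)
        have : ∃ i, a⁻¹ * b ∉ N i := by
          by_contra hcon
          push_neg at hcon
          have : a⁻¹ * b ∈ ⨅ i, N i := Subgroup.mem_iInf.2 hcon
          rw [hinf] at this
          exact hne this
        obtain ⟨i₀, hi₀⟩ := this
        refine ⟨i₀, fun i hi => ?_⟩
        haveI := hnormal i
        rw [hrel i]
        constructor
        · intro hmem; exact absurd (hanti hi hmem) hi₀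
        · intro hr; exact absurd hr hab
    | rel R ts => exact R.elim
  | imp h₁ h₂ ih₁ ih₂ =>
    obtain ⟨i₁, hi₁⟩ := ih₁
    obtain ⟨i₂, hi₂⟩ := ih₂
    refine ⟨max i₁ i₂, fun i hi => ?_⟩
    haveI := hnormal i
    have e₁ := hi₁ i (le_trans (le_max_left _ _) hi)
    have e₂ := hi₂ i (le_trans (le_max_right _ _) hi)
    simp only [Language.BoundedFormula.realize_imp, e₁, e₂]

/-- If `N₁ ⊇ N₂ ⊇ …` is a descending chain of normal subgroups of `G` with trivial
intersection and a universal sentence `φ` holds in every quotient `G / Nᵢ`, then `φ`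
holds in `G`. -/
theorem universal_sentence_of_residual_chain (G : Type) [Group G]
    (N : ℕ → Subgroup G) (hnormal : ∀ i, (N i).Normal) (hanti : Antitone N)
    (hinf : ⨅ i, N i = ⊥)
    (φ : grpLang.Sentence) (huniv : IsUniversalSentence φ)
    (h : ∀ i, haveI := hnormal i; (G ⧸ N i) ⊨ φ) :
    G ⊨ φ := by
  obtain ⟨k, ψ, hqf, rfl⟩ := huniv
  simp only [Language.Sentence.Realize, Language.BoundedFormula.realize_alls] at h ⊢
  intro xs
  obtain ⟨i₀, hi₀⟩ := key G N hnormal hanti hinf ψ hqf default xs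
  haveI := hnormal i₀
  have hq := h i₀ ((quotHom G (N i₀)) ∘ xs)
  rw [← hi₀ i₀ le_rfl]
  convert hq using 2
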